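/- Let F be a field, G a finite group, and A an FG-module with the finite r-generator property. Then A is finite-dimensional over F with dim_F(A) ≤ r·|G|. -/

import Mathlib

/-- `B` can be generated by at most `n` elements. -/
def genLE (R : Type*) [Ring R] {M : Type*} [AddCommGroup M] [Module R M]
    (B : Submodule R M) (n : ℕ) : Prop :=
  ∃ S : Finset M, S.card ≤ n ∧ Submodule.span R (S : Set M) = B

/-- `M` has the finite `r`-generator property. -/
def finGenProp (R : Type*) [Ring R] (M : Type*) [AddCommGroup M] [Module R M]
    (r : ℕ) : Prop :=
  (∀ B : Submodule R M, B.FG → genLE R B r) ∧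
  (∃ B : Submodule R M, B.FG ∧ ∀ n : ℕ, genLE R B n → r ≤ n)

section aux

variable (F : Type*) [Field F] (G : Type*) [Group G] [Fintype G]
    (A : Type*) [AddCommGroup A] [Module (MonoidAlgebra F G) A]
    [Module F A] [IsScalarTower F (MonoidAlgebra F G) A]

/-- Given a finset `S`, the finset of all `g • s`. -/
noncomputable def orbitSet (S : Finset A) : Finset A :=
  letI := Classical.decEq A
  Finset.image (fun p : G × A => MonoidAlgebra.single p.1 (1 : F) • p.2)
    ((Finset.univ : Finset G) ×ˢ S)

lemma single_smul_mem_span (S : Finset A) (g : G) :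
    ∀ x ∈ Submodule.span F ((orbitSet F G A S : Finset A) : Set A),
      MonoidAlgebra.single g (1 : F) • x ∈
        Submodule.span F ((orbitSet F G A S : Finset A) : Set A) := by
  intro x hx
  induction hx using Submodule.span_induction with
  | mem y hy =>
      apply Submodule.subset_span
      simp only [orbitSet, Finset.coe_image, Set.mem_image] at hy ⊢
      obtain ⟨⟨g', a⟩, hmem, rfl⟩ := hy
      refine ⟨(g * g', a), ?_, ?_⟩
      · simp only [Finset.mem_coe, Finset.mem_product] at hmem ⊢
        exact ⟨Finset.mem_univ _, hmem.2⟩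
      · rw [← mul_smul, MonoidAlgebra.single_mul_single, one_mul]
  | zero => simp
  | add y z hy hz ihy ihz => rw [smul_add]; exact Submodule.add_mem _ ihy ihz
  | smul a y hy ihy =>
      have : MonoidAlgebra.single g (1 : F) • a • y =
          a • (MonoidAlgebra.single g (1 : F) • y) :=
        calc MonoidAlgebra.single g (1 : F) • a • y
            = MonoidAlgebra.single g (1 : F) • ((a • (1 : MonoidAlgebra F G)) • y) := by
              rw [smul_assoc, one_smul]
          _ = (MonoidAlgebra.single g (1 : F) * (a • (1 : MonoidAlgebra F G))) • y :=
              (mul_smul _ _ _).symm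
          _ = (a • (MonoidAlgebra.single g (1 : F) * 1)) • y := by rw [mul_smul_comm]
          _ = (a • MonoidAlgebra.single g (1 : F)) • y := by rw [mul_one]
          _ = a • (MonoidAlgebra.single g (1 : F) • y) := smul_assoc _ _ _
      rw [this]
      exact Submodule.smul_mem _ _ ihy

lemma fg_span_subset (S : Finset A) :
    (Submodule.span (MonoidAlgebra F G) (S : Set A) : Set A) ⊆
      (Submodule.span F ((orbitSet F G A S : Finset A) : Set A) : Set A) := by
  intro x hx
  induction hx using Submodule.span_induction with
  | mem y hy =>
      apply Submodule.subset_span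
      simp only [orbitSet, Finset.coe_image, Set.mem_image]
      refine ⟨(1, y), ?_, ?_⟩
      · simp only [Finset.mem_coe, Finset.mem_product]
        exact ⟨Finset.mem_univ _, hy⟩
      · show MonoidAlgebra.single (1 : G) (1 : F) • y = y
        rw [← MonoidAlgebra.one_def, one_smul]
  | zero => exact Submodule.zero_mem _
  | add y z hy hz ihy ihz => exact Submodule.add_mem _ ihy ihz
  | smul c y hy ihy =>
      induction c using MonoidAlgebra.induction_on with
      | of g => exact single_smul_mem_span F G A S g y ihy
      | add c d hc hd => rw [add_smul]; exact Submodule.add_mem _ hc hd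
      | smul a c hc => rw [smul_assoc]; exact Submodule.smul_mem _ _ hc

end aux

theorem stmt7 (F : Type*) [Field F] (G : Type*) [Group G] [Fintype G]
    (A : Type*) [AddCommGroup A] [Module (MonoidAlgebra F G) A]
    [Module F A] [IsScalarTower F (MonoidAlgebra F G) A]
    (r : ℕ) (h : finGenProp (MonoidAlgebra F G) A r) :
    FiniteDimensional F A ∧ Module.finrank F A ≤ r * Fintype.card G := by
  have H : ∀ s : Finset A, (LinearIndependent F fun i : s => (i : A)) →
      s.card ≤ r * Fintype.card G := by
    intro s hs
    obtain ⟨S, hScard, hSspan⟩ :=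
      h.1 (Submodule.span (MonoidAlgebra F G) (s : Set A)) (Submodule.fg_span (s.finite_toSet))
    have hsub : (s : Set A) ⊆
        (Submodule.span F ((orbitSet F G A S : Finset A) : Set A) : Set A) := by
      intro x hx
      apply fg_span_subset F G A S
      rw [hSspan]
      exact Submodule.subset_span hx
    have h1 : s.card = Module.finrank F (Submodule.span F (s : Set A)) :=
      (finrank_span_finset_eq_card hs).symm
    have h2 : Submodule.span F (s : Set A) ≤
        Submodule.span F ((orbitSet F G A S : Finset A) : Set A) :=
      Submodule.span_le.mpr hsub
    have h3 := Submodule.finrank_mono (R := F) (M := A) h2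
    have h4 : Module.finrank F (Submodule.span F ((orbitSet F G A S : Finset A) : Set A)) ≤
        (orbitSet F G A S).card := finrank_span_finset_le_card _
    have h5 : (orbitSet F G A S).card ≤ Fintype.card G * S.card := by
      letI := Classical.decEq A
      calc (orbitSet F G A S).card ≤ ((Finset.univ : Finset G) ×ˢ S).card :=
            Finset.card_image_le
        _ = Fintype.card G * S.card := by simp [Finset.card_product]
    calc s.card = _ := h1
      _ ≤ _ := h3
      _ ≤ (orbitSet F G A S).card := h4
      _ ≤ Fintype.card G * S.card := h5
      _ ≤ Fintype.card G * r := Nat.mul_le_mul_left _ hScard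
      _ = r * Fintype.card G := Nat.mul_comm _ _
  have hrank : Module.rank F A ≤ (r * Fintype.card G : ℕ) := rank_le H
  have hfd : FiniteDimensional F A :=
    Module.rank_lt_aleph0_iff.mp (hrank.trans_lt (Cardinal.nat_lt_aleph0 _))
  exact ⟨hfd, Module.finrank_le_of_rank_le hrank⟩
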